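/- For every integer r ≥ 3, the graph G_{2r+1} has 6r + 6 vertices and has no perfect matching. -/

import Mathlib

/-- A matching `M` of `G` is maximum if no matching of `G` has more edges. -/
def SimpleGraph.IsMaximumMatching {α : Type*} (G : SimpleGraph α) (M : G.Subgraph) : Prop :=
  M.IsMatching ∧ ∀ M' : G.Subgraph, M'.IsMatching → M'.edgeSet.ncard ≤ M.edgeSet.ncard

/-- The (underlying simple) graph `G_n` of the paper (used with `n = 2r + 1`):
the vertices `x, y, z` are encoded as `Sum.inl 0, Sum.inl 1, Sum.inl 2`, the vertex
`v_{k+1}^{(i)}` is encoded as `Sum.inr (k, i)`; `x` is joined to every `v_1^{(i)}`,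
`y` to every `v_2^{(i)}`, `z` to every `v_3^{(i)}`, and for each `i` the vertices
`v_1^{(i)}, v_2^{(i)}, v_3^{(i)}` form a triangle. -/
def GGraph (n : ℕ) : SimpleGraph (Fin 3 ⊕ Fin 3 × Fin n) where
  Adj a b :=
    match a, b with
    | .inl k, .inr p => p.1 = k
    | .inr p, .inl k => p.1 = k
    | .inr p, .inr q => p.2 = q.2 ∧ p.1 ≠ q.1
    | _, _ => False
  symm := by
    constructor
    rintro (k | p) (k' | q) h
    · exact h
    · exact h
    · exact h
    · exact ⟨h.1.symm, h.2.symm⟩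
  loopless := by
    constructor
    rintro (k | p) h
    · exact h
    · exact h.2 rfl

/-- `G_{2r+1}` has `6r + 6` vertices and no perfect matching. -/
theorem stmt_7 (r : ℕ) (hr : 3 ≤ r) :
    Fintype.card (Fin 3 ⊕ Fin 3 × Fin (2 * r + 1)) = 6 * r + 6 ∧
    ¬ ∃ M : (GGraph (2 * r + 1)).Subgraph, M.IsPerfectMatching := by
  constructor
  · simp [Fintype.card_sum, Fintype.card_prod]
    ring
  rintro ⟨M, hM, hsp⟩
  -- every triangle has a vertex matched to a hub
  have key : ∀ i : Fin (2*r+1), ∃ k : Fin 3, M.Adj (Sum.inl k) (Sum.inr (k, i)) := by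
    intro i
    by_contra h
    push_neg at h
    -- each triangle vertex is matched within the triangle
    have tri : ∀ j : Fin 3, ∃ j' : Fin 3, j' ≠ j ∧
        M.Adj (Sum.inr (j, i)) (Sum.inr (j', i)) := by
      intro j
      obtain ⟨w, hw, -⟩ := hM (hsp (Sum.inr (j, i)))
      have hG := M.adj_sub hw
      match w, hw, hG with
      | Sum.inl k, hw, hG =>
          have hjk : j = k := hG
          subst hjk
          exact absurd hw.symm (h j)
      | Sum.inr ⟨q1, q2⟩, hw, hG =>
          obtain ⟨h1, h2⟩ := hG
          have h1' : i = q2 := h1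
          have h2' : j ≠ q1 := h2
          subst h1'
          exact ⟨q1, (Ne.symm h2'), hw⟩
    obtain ⟨a, ha, hMa⟩ := tri 0
    -- partner of 0 is a; third vertex b
    obtain ⟨c, hc, hMc⟩ := tri (if a = 1 then 2 else 1)
    set b : Fin 3 := if a = 1 then 2 else 1 with hb
    -- c must be 0 or a, both impossible
    have ha' : a = 1 ∨ a = 2 := by fin_cases a <;> simp_all
    have hc' : c = 0 ∨ c = a := by
      rcases ha' with h1 | h1 <;> subst h1 <;> fin_cases c <;> simp_all
    rcases hc' with h1 | h1
    · rw [h1] at hMc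
      have heq := (hM (hsp (Sum.inr ((0 : Fin 3), i)))).unique hMa hMc.symm
      have : a = b := by simpa using heq
      rcases ha' with h1 | h1 <;> simp [hb, h1] at this
    · rw [h1] at hMc
      have heq := (hM (hsp (Sum.inr (a, i)))).unique hMa.symm hMc.symm
      have : (0 : Fin 3) = b := by simpa using heq
      rcases ha' with h1 | h1 <;> simp [hb, h1] at this
  choose f hf using key
  have hinj : Function.Injective f := by
    intro i i' hii
    have h1 := hf i
    have h2 := hf i'
    rw [hii] at h1
    have := (hM (hsp (Sum.inl (f i')))).unique h1 h2
    simpa using this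
  have := Fintype.card_le_of_injective f hinj
  simp at this
  omega
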